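/- Let d ≥ 4 be even and let G be the d × d matrix with diagonal entries (d−1)(d−2)/(2d) and off-diagonal entries (1−d)/d when i − j is even and 0 when i − j is odd. Then G has rank d − 2; equivalently, its kernel over ℚ is 2-dimensional, spanned by the all-ones vectors on the even-index and odd-index coordinates respectively. -/

import Mathlib

lemma sum_even_range (m : ℕ) :
    ∑ j ∈ Finset.range (2 * m), (if Even j then (1:ℚ) else 0) = m := by
  induction m with
  | zero => simp
  | succ m ih =>
    have h : 2 * (m + 1) = 2 * m + 1 + 1 := by ring
    rw [h, Finset.sum_range_succ, Finset.sum_range_succ, ih]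
    simp [Nat.even_add_one, Nat.even_mul]

lemma sum_odd_range (m : ℕ) :
    ∑ j ∈ Finset.range (2 * m), (if Even j then (0:ℚ) else 1) = m := by
  induction m with
  | zero => simp
  | succ m ih =>
    have h : 2 * (m + 1) = 2 * m + 1 + 1 := by ring
    rw [h, Finset.sum_range_succ, Finset.sum_range_succ, ih]
    simp [Nat.even_add_one, Nat.even_mul]

/-- For even `d ≥ 4`, the `d × d` Gram matrix `G` of the explicit points on
the Legendre curve (diagonal entries `(d−1)(d−2)/(2d)`, off-diagonal entries `(1−d)/d`
when `i − j` is even and `0` when `i − j` is odd) has rank `d − 2`, and its kernel over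
`ℚ` is spanned by the indicator vectors of the even-index and odd-index coordinates. -/
theorem gram_matrix_rank (d : ℕ) (hd : 4 ≤ d) (hde : Even d)
    (G : Matrix (Fin d) (Fin d) ℚ)
    (hG : ∀ i j, G i j =
      if i = j then ((d : ℚ) - 1) * ((d : ℚ) - 2) / (2 * d)
      else if Even ((i : ℤ) - (j : ℤ)) then (1 - (d : ℚ)) / d
      else 0) :
    G.rank = d - 2 ∧
      LinearMap.ker G.mulVecLin = Submodule.span ℚ
        {(fun i => if Even (i : ℕ) then 1 else 0 : Fin d → ℚ),
         (fun i => if Even (i : ℕ) then 0 else 1 : Fin d → ℚ)} := by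
  obtain ⟨m, hm⟩ := hde
  have hm2 : d = 2 * m := by omega
  have hd0 : (d : ℚ) ≠ 0 := Nat.cast_ne_zero.mpr (by omega)
  have hdm : (d : ℚ) = 2 * m := by rw [hm2]; push_cast; ring
  have hd1 : (d : ℚ) - 1 ≠ 0 := by
    have : (4:ℚ) ≤ (d:ℚ) := by exact_mod_cast hd
    intro h; nlinarith
  set a : ℚ := ((d : ℚ) - 1) * ((d : ℚ) - 2) / (2 * d) with ha
  set b : ℚ := (1 - (d : ℚ)) / d with hb
  set e0 : Fin d → ℚ := (fun i => if Even (i : ℕ) then 1 else 0) with he0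
  set e1 : Fin d → ℚ := (fun i => if Even (i : ℕ) then 0 else 1) with he1
  set S0 : (Fin d → ℚ) → ℚ := fun v => ∑ j : Fin d, if Even ((j : Fin d) : ℕ) then v j else 0
    with hS0
  set S1 : (Fin d → ℚ) → ℚ := fun v => ∑ j : Fin d, if Even ((j : Fin d) : ℕ) then 0 else v j
    with hS1
  -- key formula for mulVec
  have hmv : ∀ (v : Fin d → ℚ) (i : Fin d),
      G.mulVec v i = ((d:ℚ) - 1) / 2 * v i + b * (if Even (i : ℕ) then S0 v else S1 v) := by
    intro v i
    have hterm : ∀ j : Fin d, G i j * v j =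
        ((d:ℚ) - 1) / 2 * (if j = i then v j else 0)
          + b * (if (Even (j : ℕ) ↔ Even (i : ℕ)) then v j else 0) := by
      intro j
      rw [hG]
      have hpar : Even ((i : ℤ) - (j : ℤ)) ↔ (Even (i : ℕ) ↔ Even (j : ℕ)) := by
        rw [Int.even_sub]
        simp [Int.even_coe_nat]
      by_cases hij : i = j
      · subst hij
        simp only [if_pos rfl, if_pos Iff.rfl, ↓reduceIte]
        rw [ha, hb]; field_simp; ring
      · have hji : ¬ (j = i) := fun h => hij h.symm
        rw [if_neg hij, if_neg hji]
        by_cases hp : Even (i : ℕ) ↔ Even (j : ℕ)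
        · rw [if_pos (hpar.mpr hp), if_pos hp.symm]; ring
        · rw [if_neg (fun h => hp (hpar.mp h)), if_neg (fun h => hp h.symm)]; ring
    unfold Matrix.mulVec dotProduct
    rw [Finset.sum_congr rfl (fun j _ => hterm j), Finset.sum_add_distrib,
      ← Finset.mul_sum, ← Finset.mul_sum, Finset.sum_ite_eq' Finset.univ i v]
    simp only [Finset.mem_univ, if_pos]
    congr 2
    by_cases hi : Even (i : ℕ)
    · rw [if_pos hi, hS0]
      refine Finset.sum_congr rfl fun j _ => ?_
      simp [hi]
    · rw [if_neg hi, hS1]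
      refine Finset.sum_congr rfl fun j _ => ?_
      by_cases hj : Even (j : ℕ) <;> simp [hi, hj]
  -- parity sums of e0, e1
  have hS0e0 : S0 e0 = m := by
    rw [hS0, he0]
    simp only
    have : ∀ j : Fin d, (if Even (j : ℕ) then (if Even (j : ℕ) then (1:ℚ) else 0) else 0)
        = (if Even (j : ℕ) then (1:ℚ) else 0) := by
      intro j; by_cases h : Even (j : ℕ) <;> simp [h]
    rw [Finset.sum_congr rfl fun j _ => this j,
      Fin.sum_univ_eq_sum_range (fun j => if Even j then (1:ℚ) else 0) d, hm2, sum_even_range]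
  have hS1e0 : S1 e0 = 0 := by
    rw [hS1, he0]
    refine Finset.sum_eq_zero fun j _ => ?_
    by_cases h : Even (j : ℕ) <;> simp [h]
  have hS0e1 : S0 e1 = 0 := by
    rw [hS0, he1]
    refine Finset.sum_eq_zero fun j _ => ?_
    by_cases h : Even (j : ℕ) <;> simp [h]
  have hS1e1 : S1 e1 = m := by
    rw [hS1, he1]
    simp only
    have : ∀ j : Fin d, (if Even (j : ℕ) then (0:ℚ) else (if Even (j : ℕ) then 0 else 1))
        = (if Even (j : ℕ) then (0:ℚ) else 1) := by
      intro j; by_cases h : Even (j : ℕ) <;> simp [h]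
    rw [Finset.sum_congr rfl fun j _ => this j,
      Fin.sum_univ_eq_sum_range (fun j => if Even j then (0:ℚ) else 1) d, hm2, sum_odd_range]
  -- the crucial arithmetic: (d-1)/2 + b * m = 0
  have hzero : ((d:ℚ) - 1) / 2 + b * m = 0 := by
    rw [hb]
    have : (m : ℚ) = (d:ℚ) / 2 := by rw [hdm]; ring
    rw [this]; field_simp; try ring
  -- e0, e1 ∈ ker
  have hke0 : G.mulVecLin e0 = 0 := by
    funext i
    rw [Matrix.mulVecLin_apply, hmv e0 i]
    by_cases hi : Even (i : ℕ)
    · rw [if_pos hi, hS0e0, he0]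
      simp only [if_pos hi, Pi.zero_apply, mul_one]
      try linarith [hzero]
    · rw [if_neg hi, hS1e0, he0]
      simp [hi]
  have hke1 : G.mulVecLin e1 = 0 := by
    funext i
    rw [Matrix.mulVecLin_apply, hmv e1 i]
    by_cases hi : Even (i : ℕ)
    · rw [if_pos hi, hS0e1, he1]
      simp [hi]
    · rw [if_neg hi, hS1e1, he1]
      simp only [if_neg hi, Pi.zero_apply, mul_one]
      linarith [hzero]
  -- kernel equality
  have hker : LinearMap.ker G.mulVecLin = Submodule.span ℚ {e0, e1} := by
    apply le_antisymm
    · intro v hv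
      rw [LinearMap.mem_ker] at hv
      have hveq : ∀ i : Fin d, ((d:ℚ) - 1) / 2 * v i
          + b * (if Even (i : ℕ) then S0 v else S1 v) = 0 := by
        intro i
        have := congrFun hv i
        rw [Matrix.mulVecLin_apply, hmv v i] at this
        exact this
      have h2 : ((d:ℚ) - 1) / 2 ≠ 0 := by
        intro h; apply hd1; field_simp at h; linarith
      set i0 : Fin d := ⟨0, by omega⟩ with hi0
      set i1 : Fin d := ⟨1, by omega⟩ with hi1
      have hconst : ∀ i : Fin d, v i = if Even (i : ℕ) then v i0 else v i1 := by
        intro i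
        by_cases hi : Even (i : ℕ)
        · rw [if_pos hi]
          have h1 := hveq i
          have h0 := hveq i0
          rw [if_pos hi] at h1
          rw [if_pos (by simp [hi0])] at h0
          have : ((d:ℚ) - 1) / 2 * (v i - v i0) = 0 := by linarith
          rcases mul_eq_zero.mp this with h | h
          · exact absurd h h2
          · linarith
        · rw [if_neg hi]
          have h1 := hveq i
          have h0 := hveq i1
          rw [if_neg hi] at h1
          rw [if_neg (by simp [hi1])] at h0
          have : ((d:ℚ) - 1) / 2 * (v i - v i1) = 0 := by linarith
          rcases mul_eq_zero.mp this with h | h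
          · exact absurd h h2
          · linarith
      have hvdecomp : v = v i0 • e0 + v i1 • e1 := by
        funext i
        rw [he0, he1]
        simp only [Pi.add_apply, Pi.smul_apply, smul_eq_mul]
        by_cases hi : Even (i : ℕ)
        · rw [hconst i]; simp [hi]
        · rw [hconst i]; simp [hi]
      rw [hvdecomp]
      exact Submodule.add_mem _
        (Submodule.smul_mem _ _ (Submodule.subset_span (by simp)))
        (Submodule.smul_mem _ _ (Submodule.subset_span (by simp)))
    · rw [Submodule.span_le]
      intro x hx
      rcases hx with h | h
      · rw [h]; exact hke0
      · rw [Set.mem_singleton_iff.mp h]; exact hke1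
  -- linear independence and finrank of kernel
  have hli : LinearIndependent ℚ ![e0, e1] := by
    rw [linearIndependent_fin2]
    constructor
    · intro h
      have := congrFun h ⟨1, by omega⟩
      rw [he1] at this
      simp at this
    · intro c h
      have := congrFun h ⟨0, by omega⟩
      rw [he0, he1] at this
      simp at this
  have hrange : Set.range ![e0, e1] = {e0, e1} := by
    simp [Matrix.range_cons, Matrix.range_empty]
    exact Set.pair_comm e1 e0
  have hfrk : Module.finrank ℚ (LinearMap.ker G.mulVecLin) = 2 := by
    rw [hker, ← hrange, finrank_span_eq_card hli]
    simp
  have hrn := LinearMap.finrank_range_add_finrank_ker G.mulVecLin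
  rw [hfrk] at hrn
  have hfd : Module.finrank ℚ (Fin d → ℚ) = d := by simp
  rw [hfd] at hrn
  refine ⟨?_, hker⟩
  have : G.rank = Module.finrank ℚ (LinearMap.range G.mulVecLin) := rfl
  rw [this]
  omega
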